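/- The identity ζ(3,4) = 17 ζ(7) − 10 ζ(5) ζ(2) holds, i.e. ∑_{0<j<k} 1/(j³ k⁴) = 17 ∑_{k≥1} 1/k⁷ − 10 (∑_{k≥1} 1/k⁵)(∑_{k≥1} 1/k²). -/

import Mathlib

open Filter Topology Set Finset

noncomputable section MZVAux

/-- shifted zeta -/
def zs (n : ℕ) : ℝ := ∑' k : ℕ, 1 / ((k : ℝ) + 1) ^ n

/-- double zeta term, inner variable `p.1+1`, outer `p.1+p.2+2` -/
def Fd (a b : ℕ) (p : ℕ × ℕ) : ℝ :=
  1 / (((p.1 : ℝ) + 1) ^ a * ((p.1 : ℝ) + (p.2 : ℝ) + 2) ^ b)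

/-- swapped double zeta term -/
def Fs (a b : ℕ) (p : ℕ × ℕ) : ℝ :=
  1 / (((p.2 : ℝ) + 1) ^ a * ((p.1 : ℝ) + (p.2 : ℝ) + 2) ^ b)

/-- double zeta value -/
def Dd (a b : ℕ) : ℝ := ∑' p : ℕ × ℕ, Fd a b p

lemma summable_zs {n : ℕ} (hn : 2 ≤ n) : Summable (fun k : ℕ => 1 / ((k : ℝ) + 1) ^ n) := by
  have h : Summable (fun k : ℕ => 1 / (k : ℝ) ^ n) :=
    Real.summable_one_div_nat_pow.mpr (by omega)
  have := (summable_nat_add_iff (f := fun k : ℕ => 1 / (k : ℝ) ^ n) 1).mpr h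
  refine this.congr fun k => ?_
  push_cast
  ring_nf

lemma summable_base :
    Summable (fun p : ℕ × ℕ => 1 / (((p.1 : ℝ) + 1) ^ 2 * ((p.2 : ℝ) + 1) ^ 2)) := by
  have h := summable_zs (n := 2) le_rfl
  have := h.mul_of_nonneg h (fun k => by positivity) (fun k => by positivity)
  refine this.congr fun p => ?_
  rw [one_div_mul_one_div]

lemma summable_dominated {f : ℕ × ℕ → ℝ} (h0 : ∀ p, 0 ≤ f p)
    (hle : ∀ p, f p ≤ 1 / (((p.1 : ℝ) + 1) ^ 2 * ((p.2 : ℝ) + 1) ^ 2)) : Summable f :=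
  Summable.of_nonneg_of_le h0 hle summable_base

lemma key_bound {a b : ℕ} (ha : 1 ≤ a) (hb : 2 ≤ b) (hab : 2 ≤ a ∨ 3 ≤ b)
    {x y : ℝ} (hx : 1 ≤ x) (hy : 1 ≤ y) :
    x ^ 2 * y ^ 2 ≤ x ^ a * (x + y) ^ b := by
  have hk : 1 ≤ x + y := by linarith
  have hyk : y ≤ x + y := by linarith
  have hxk : x ≤ x + y := by linarith
  rcases hab with h2a | h3b
  · have h1 : x ^ 2 ≤ x ^ a := pow_le_pow_right₀ hx h2a
    have h2 : y ^ 2 ≤ (x + y) ^ 2 := pow_le_pow_left₀ (by linarith) hyk 2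
    have h3 : (x + y) ^ 2 ≤ (x + y) ^ b := pow_le_pow_right₀ hk hb
    have h4 : y ^ 2 ≤ (x + y) ^ b := h2.trans h3
    exact mul_le_mul h1 h4 (by positivity) (by positivity)
  · have h1 : x ≤ x ^ a := le_self_pow₀ (by linarith) (by omega)
    have h2 : x * y ^ 2 ≤ (x + y) ^ 3 := by
      calc x * y ^ 2 = x * y * y := by ring
      _ ≤ (x + y) * (x + y) * (x + y) :=
        mul_le_mul (mul_le_mul hxk hyk (by linarith) (by linarith)) hyk (by linarith)
          (by positivity)
      _ = (x + y) ^ 3 := by ring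
    have h3 : (x + y) ^ 3 ≤ (x + y) ^ b := pow_le_pow_right₀ hk h3b
    calc x ^ 2 * y ^ 2 = x * (x * y ^ 2) := by ring
    _ ≤ x ^ a * (x + y) ^ b := mul_le_mul h1 (h2.trans h3) (by positivity) (by positivity)

lemma summable_Fd {a b : ℕ} (ha : 1 ≤ a) (hb : 2 ≤ b) (hab : 2 ≤ a ∨ 3 ≤ b) :
    Summable (Fd a b) := by
  refine summable_dominated (fun p => by unfold Fd; positivity) fun p => ?_
  unfold Fd
  have hx : (1 : ℝ) ≤ (p.1 : ℝ) + 1 := by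
    have := Nat.cast_nonneg (α := ℝ) p.1; linarith
  have hy : (1 : ℝ) ≤ (p.2 : ℝ) + 1 := by
    have := Nat.cast_nonneg (α := ℝ) p.2; linarith
  have := key_bound ha hb hab hx hy
  have h2 : ((p.1 : ℝ) + 1) + ((p.2 : ℝ) + 1) = (p.1 : ℝ) + (p.2 : ℝ) + 2 := by ring
  rw [h2] at this
  exact one_div_le_one_div_of_le (by positivity) this

lemma summable_Fs {a b : ℕ} (ha : 1 ≤ a) (hb : 2 ≤ b) (hab : 2 ≤ a ∨ 3 ≤ b) :
    Summable (Fs a b) := by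
  have h := (summable_Fd ha hb hab).prod_symm
  refine h.congr fun p => ?_
  unfold Fd Fs
  simp only [Prod.fst_swap, Prod.snd_swap]
  ring_nf

lemma tsum_Fs (a b : ℕ) : ∑' p : ℕ × ℕ, Fs a b p = Dd a b := by
  rw [Dd, ← (Equiv.prodComm ℕ ℕ).tsum_eq (Fd a b)]
  refine tsum_congr fun p => ?_
  unfold Fd Fs
  simp only [Equiv.prodComm_apply, Prod.fst_swap, Prod.snd_swap]
  ring_nf

def eLT : ℕ × ℕ ≃ {p : ℕ × ℕ // p.1 < p.2} where
  toFun q := ⟨(q.1, q.1 + q.2 + 1), by omega⟩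
  invFun p := (p.1.1, p.1.2 - p.1.1 - 1)
  left_inv q := by ext <;> simp <;> omega
  right_inv p := by
    obtain ⟨⟨a, b⟩, h⟩ := p
    simp only at h
    apply Subtype.ext
    ext <;> simp <;> omega

def eGT : ℕ × ℕ ≃ {p : ℕ × ℕ // p.2 < p.1} where
  toFun q := ⟨(q.1 + q.2 + 1, q.1), by omega⟩
  invFun p := (p.1.2, p.1.1 - p.1.2 - 1)
  left_inv q := by ext <;> simp <;> omega
  right_inv p := by
    obtain ⟨⟨a, b⟩, h⟩ := p
    simp only at h
    apply Subtype.ext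
    ext <;> simp <;> omega

def eEQ : ℕ ≃ {p : ℕ × ℕ // p.1 = p.2} where
  toFun k := ⟨(k, k), rfl⟩
  invFun p := p.1.1
  left_inv k := rfl
  right_inv p := by
    obtain ⟨⟨a, b⟩, h⟩ := p
    simp only at h
    apply Subtype.ext
    ext <;> simp <;> omega

/-- the subtype in the theorem statement -/
def eMain : ℕ × ℕ ≃ {p : ℕ × ℕ // 0 < p.1 ∧ p.1 < p.2} where
  toFun q := ⟨(q.1 + 1, q.1 + q.2 + 2), by omega⟩
  invFun p := (p.1.1 - 1, p.1.2 - p.1.1 - 1)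
  left_inv q := by ext <;> simp <;> omega
  right_inv p := by
    obtain ⟨⟨a, b⟩, h⟩ := p
    simp only at h
    apply Subtype.ext
    ext <;> simp <;> omega

/-- diagonal-indexed equiv -/
def eSig : (Σ k : ℕ, Fin (k + 1)) ≃ ℕ × ℕ where
  toFun q := (q.1 - q.2, (q.2 : ℕ))
  invFun p := ⟨p.1 + p.2, ⟨p.2, by omega⟩⟩
  left_inv q := by
    obtain ⟨k, i⟩ := q
    have h : (i : ℕ) ≤ k := Nat.lt_succ_iff.mp i.isLt
    refine Sigma.ext (by simp; omega) ?_
    refine (Fin.heq_ext_iff (by simp; omega)).2 ?_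
    simp
  right_inv p := by ext <;> simp

lemma eLT_apply (q : ℕ × ℕ) : (eLT q : ℕ × ℕ) = (q.1, q.1 + q.2 + 1) := rfl
lemma eGT_apply (q : ℕ × ℕ) : (eGT q : ℕ × ℕ) = (q.1 + q.2 + 1, q.1) := rfl
lemma eEQ_apply (k : ℕ) : (eEQ k : ℕ × ℕ) = (k, k) := rfl
lemma eMain_apply (q : ℕ × ℕ) : (eMain q : ℕ × ℕ) = (q.1 + 1, q.1 + q.2 + 2) := rfl
lemma eSig_apply (q : Σ k : ℕ, Fin (k + 1)) : eSig q = (q.1 - (q.2 : ℕ), (q.2 : ℕ)) := rfl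

-- placeholders from p1/p2 (will be concatenated later); here re-declare minimal


def Gg (a b : ℕ) (p : ℕ × ℕ) : ℝ := 1 / (((p.1 : ℝ) + 1) ^ a * ((p.2 : ℝ) + 1) ^ b)

set_option maxHeartbeats 1000000 in
lemma summable_Gg {a b : ℕ} (ha : 2 ≤ a) (hb : 2 ≤ b) : Summable (Gg a b) := by
  have h := (summable_zs ha).mul_of_nonneg (summable_zs hb)
    (fun k => by positivity) (fun k => by positivity)
  refine h.congr fun p => ?_
  rw [Gg, one_div_mul_one_div]

set_option maxHeartbeats 1000000 in
lemma prod_tsum {a b : ℕ} (ha : 2 ≤ a) (hb : 2 ≤ b) :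
    zs a * zs b = ∑' p : ℕ × ℕ, Gg a b p := by
  have h1 : ∑' p : ℕ × ℕ, Gg a b p
      = ∑' p : ℕ × ℕ, (1 / ((p.1 : ℝ) + 1) ^ a) * (1 / ((p.2 : ℝ) + 1) ^ b) :=
    tsum_congr fun p => by rw [Gg, one_div_mul_one_div]
  have hsum : Summable (fun p : ℕ × ℕ => (1 / ((p.1 : ℝ) + 1) ^ a) * (1 / ((p.2 : ℝ) + 1) ^ b)) :=
    (summable_zs ha).mul_of_nonneg (summable_zs hb)
      (fun k => by positivity) (fun k => by positivity)
  rw [h1]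
  rw [Summable.tsum_prod' hsum (fun j => Summable.congr
    ((summable_zs hb).mul_left (1 / ((j : ℝ) + 1) ^ a)) (fun c => rfl))]
  simp_rw [tsum_mul_left, tsum_mul_right]
  rfl

set_option maxHeartbeats 1000000 in
lemma stuffle {a b : ℕ} (ha : 2 ≤ a) (hb : 2 ≤ b) :
    zs a * zs b = Dd a b + zs (a + b) + Dd b a := by
  have hg : Summable (Gg a b) := summable_Gg ha hb
  have hsplit : ∀ p : ℕ × ℕ, Gg a b p =
      ({p : ℕ × ℕ | p.1 < p.2}.indicator (Gg a b) p
        + {p : ℕ × ℕ | p.1 = p.2}.indicator (Gg a b) p)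
        + {p : ℕ × ℕ | p.2 < p.1}.indicator (Gg a b) p := by
    intro p
    simp only [Set.indicator_apply, Set.mem_setOf_eq]
    rcases lt_trichotomy p.1 p.2 with h | h | h
    · rw [if_pos h, if_neg (by omega), if_neg (by omega)]; ring
    · rw [if_neg (by omega), if_pos h, if_neg (by omega)]; ring
    · rw [if_neg (by omega), if_neg (by omega), if_pos h]; ring
  rw [prod_tsum ha hb, tsum_congr hsplit,
    Summable.tsum_add ((hg.indicator _).add (hg.indicator _)) (hg.indicator _),
    Summable.tsum_add (hg.indicator _) (hg.indicator _)]
  have hLT : ∑' p : ℕ × ℕ, {p : ℕ × ℕ | p.1 < p.2}.indicator (Gg a b) p = Dd a b := by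
    rw [← _root_.tsum_subtype]
    refine ((eLT.tsum_eq (fun x : {p : ℕ × ℕ // p.1 < p.2} => Gg a b ↑x)).symm).trans ?_
    refine tsum_congr fun q => ?_
    have h := eLT_apply q
    show Gg a b (eLT q : ℕ × ℕ) = Fd a b q
    rw [h, Gg, Fd]
    push_cast
    ring_nf
  have hGT : ∑' p : ℕ × ℕ, {p : ℕ × ℕ | p.2 < p.1}.indicator (Gg a b) p = Dd b a := by
    rw [← _root_.tsum_subtype]
    refine ((eGT.tsum_eq (fun x : {p : ℕ × ℕ // p.2 < p.1} => Gg a b ↑x)).symm).trans ?_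
    refine tsum_congr fun q => ?_
    have h := eGT_apply q
    show Gg a b (eGT q : ℕ × ℕ) = Fd b a q
    rw [h, Gg, Fd]
    push_cast
    ring_nf
  have hEQ : ∑' p : ℕ × ℕ, {p : ℕ × ℕ | p.1 = p.2}.indicator (Gg a b) p = zs (a + b) := by
    rw [← _root_.tsum_subtype]
    refine ((eEQ.tsum_eq (fun x : {p : ℕ × ℕ // p.1 = p.2} => Gg a b ↑x)).symm).trans ?_
    refine tsum_congr fun k => ?_
    have h := eEQ_apply k
    show Gg a b (eEQ k : ℕ × ℕ) = 1 / ((k : ℝ) + 1) ^ (a + b)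
    rw [h, Gg, pow_add]
  rw [hLT, hGT, hEQ]

set_option maxHeartbeats 1000000 in
lemma pf34 (x y : ℝ) (hx : 0 < x) (hy : 0 < y) :
    1 / (x ^ 3 * y ^ 4) =
      1 / (x ^ 3 * (x + y) ^ 4) + (4 * (1 / (x ^ 2 * (x + y) ^ 5)) + (10 * (1 / (x * (x + y) ^ 6)) +
        (1 / (y ^ 4 * (x + y) ^ 3) + (3 * (1 / (y ^ 3 * (x + y) ^ 4)) +
        (6 * (1 / (y ^ 2 * (x + y) ^ 5)) + 10 * (1 / (y * (x + y) ^ 6))))))) := by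
  have hk : 0 < x + y := by linarith
  field_simp
  ring

set_option maxHeartbeats 1000000 in
lemma pf25 (x y : ℝ) (hx : 0 < x) (hy : 0 < y) :
    1 / (x ^ 2 * y ^ 5) =
      1 / (x ^ 2 * (x + y) ^ 5) + (5 * (1 / (x * (x + y) ^ 6)) +
        (1 / (y ^ 5 * (x + y) ^ 2) + (2 * (1 / (y ^ 4 * (x + y) ^ 3)) +
        (3 * (1 / (y ^ 3 * (x + y) ^ 4)) + (4 * (1 / (y ^ 2 * (x + y) ^ 5))
          + 5 * (1 / (y * (x + y) ^ 6))))))) := by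
  have hk : 0 < x + y := by linarith
  field_simp
  ring

lemma tsum_add7 {f1 f2 f3 f4 f5 f6 f7 : ℕ × ℕ → ℝ} (h1 : Summable f1) (h2 : Summable f2)
    (h3 : Summable f3) (h4 : Summable f4) (h5 : Summable f5) (h6 : Summable f6)
    (h7 : Summable f7) :
    ∑' p, (f1 p + (f2 p + (f3 p + (f4 p + (f5 p + (f6 p + f7 p)))))) =
      (∑' p, f1 p) + ((∑' p, f2 p) + ((∑' p, f3 p) + ((∑' p, f4 p)
        + ((∑' p, f5 p) + ((∑' p, f6 p) + (∑' p, f7 p)))))) := by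
  rw [Summable.tsum_add h1 (h2.add (h3.add (h4.add (h5.add (h6.add h7))))),
    Summable.tsum_add h2 (h3.add (h4.add (h5.add (h6.add h7)))),
    Summable.tsum_add h3 (h4.add (h5.add (h6.add h7))),
    Summable.tsum_add h4 (h5.add (h6.add h7)), Summable.tsum_add h5 (h6.add h7), Summable.tsum_add h6 h7]

set_option maxHeartbeats 1000000 in
lemma euler34 : zs 3 * zs 4 =
    4 * Dd 3 4 + Dd 4 3 + 10 * Dd 2 5 + 20 * Dd 1 6 := by
  have s34 := summable_Fd (a := 3) (b := 4) (by norm_num) (by norm_num) (Or.inl (by norm_num))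
  have s25 := summable_Fd (a := 2) (b := 5) (by norm_num) (by norm_num) (Or.inl (by norm_num))
  have s16 := summable_Fd (a := 1) (b := 6) (by norm_num) (by norm_num) (Or.inr (by norm_num))
  have t43 := summable_Fs (a := 4) (b := 3) (by norm_num) (by norm_num) (Or.inl (by norm_num))
  have t34 := summable_Fs (a := 3) (b := 4) (by norm_num) (by norm_num) (Or.inl (by norm_num))
  have t25 := summable_Fs (a := 2) (b := 5) (by norm_num) (by norm_num) (Or.inl (by norm_num))
  have t16 := summable_Fs (a := 1) (b := 6) (by norm_num) (by norm_num) (Or.inr (by norm_num))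
  have pw : ∀ p : ℕ × ℕ, Gg 3 4 p =
      Fd 3 4 p + (4 * Fd 2 5 p + (10 * Fd 1 6 p + (Fs 4 3 p +
        (3 * Fs 3 4 p + (6 * Fs 2 5 p + 10 * Fs 1 6 p))))) := by
    intro p
    unfold Gg Fd Fs
    have hx : (0:ℝ) < (p.1 : ℝ) + 1 := by positivity
    have hy : (0:ℝ) < (p.2 : ℝ) + 1 := by positivity
    have hxy : (p.1 : ℝ) + (p.2 : ℝ) + 2 = ((p.1 : ℝ) + 1) + ((p.2 : ℝ) + 1) := by ring
    rw [hxy]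
    simp only [pow_one]
    exact pf34 ((p.1 : ℝ) + 1) ((p.2 : ℝ) + 1) hx hy
  rw [prod_tsum (by norm_num) (by norm_num), tsum_congr pw,
    tsum_add7 s34 (s25.mul_left 4) (s16.mul_left 10) t43 (t34.mul_left 3)
      (t25.mul_left 6) (t16.mul_left 10)]
  rw [tsum_mul_left, tsum_mul_left, tsum_mul_left, tsum_mul_left, tsum_mul_left]
  rw [tsum_Fs, tsum_Fs, tsum_Fs, tsum_Fs]
  show Dd 3 4 + (4 * Dd 2 5 + (10 * Dd 1 6 + (Dd 4 3 + (3 * Dd 3 4 + (6 * Dd 2 5 + 10 * Dd 1 6))))) = _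
  ring

set_option maxHeartbeats 1000000 in
lemma euler25 : zs 2 * zs 5 =
    Dd 5 2 + 2 * Dd 4 3 + 3 * Dd 3 4 + 5 * Dd 2 5 + 10 * Dd 1 6 := by
  have s25 := summable_Fd (a := 2) (b := 5) (by norm_num) (by norm_num) (Or.inl (by norm_num))
  have s16 := summable_Fd (a := 1) (b := 6) (by norm_num) (by norm_num) (Or.inr (by norm_num))
  have t52 := summable_Fs (a := 5) (b := 2) (by norm_num) (by norm_num) (Or.inl (by norm_num))
  have t43 := summable_Fs (a := 4) (b := 3) (by norm_num) (by norm_num) (Or.inl (by norm_num))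
  have t34 := summable_Fs (a := 3) (b := 4) (by norm_num) (by norm_num) (Or.inl (by norm_num))
  have t25 := summable_Fs (a := 2) (b := 5) (by norm_num) (by norm_num) (Or.inl (by norm_num))
  have t16 := summable_Fs (a := 1) (b := 6) (by norm_num) (by norm_num) (Or.inr (by norm_num))
  have pw : ∀ p : ℕ × ℕ, Gg 2 5 p =
      Fd 2 5 p + (5 * Fd 1 6 p + (Fs 5 2 p + (2 * Fs 4 3 p +
        (3 * Fs 3 4 p + (4 * Fs 2 5 p + 5 * Fs 1 6 p))))) := by
    intro p
    unfold Gg Fd Fs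
    have hx : (0:ℝ) < (p.1 : ℝ) + 1 := by positivity
    have hy : (0:ℝ) < (p.2 : ℝ) + 1 := by positivity
    have hxy : (p.1 : ℝ) + (p.2 : ℝ) + 2 = ((p.1 : ℝ) + 1) + ((p.2 : ℝ) + 1) := by ring
    rw [hxy]
    simp only [pow_one]
    exact pf25 ((p.1 : ℝ) + 1) ((p.2 : ℝ) + 1) hx hy
  rw [prod_tsum (by norm_num) (by norm_num), tsum_congr pw,
    tsum_add7 s25 (s16.mul_left 5) t52 (t43.mul_left 2) (t34.mul_left 3)
      (t25.mul_left 4) (t16.mul_left 5)]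
  rw [tsum_mul_left, tsum_mul_left, tsum_mul_left, tsum_mul_left, tsum_mul_left]
  rw [tsum_Fs, tsum_Fs, tsum_Fs, tsum_Fs, tsum_Fs]
  show Dd 2 5 + (5 * Dd 1 6 + (Dd 5 2 + (2 * Dd 4 3 + (3 * Dd 3 4 + (4 * Dd 2 5 + 5 * Dd 1 6))))) = _
  ring

/-- harmonic number -/
def Hh (n : ℕ) : ℝ := ∑ i ∈ Finset.range n, 1 / ((i : ℝ) + 1)

lemma Hh_nonneg (n : ℕ) : 0 ≤ Hh n :=
  Finset.sum_nonneg fun i _ => by positivity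

lemma Hh_le (n : ℕ) : Hh n ≤ n := by
  have h : ∀ i ∈ Finset.range n, 1 / ((i : ℝ) + 1) ≤ 1 := by
    intro i _
    rw [div_le_one (by positivity)]
    have : (0:ℝ) ≤ (i:ℝ) := Nat.cast_nonneg i
    linarith
  calc Hh n ≤ ∑ _i ∈ Finset.range n, (1:ℝ) := Finset.sum_le_sum h
  _ = n := by simp

lemma Hh_succ (n : ℕ) : Hh (n + 1) = Hh n + 1 / ((n : ℝ) + 1) :=
  Finset.sum_range_succ _ n

lemma tele (c : ℝ) (hc : 0 < c) :
    HasSum (fun m : ℕ => 1 / ((m : ℝ) + c) - 1 / ((m : ℝ) + c + 1)) (1 / c) := by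
  have hnn : ∀ m : ℕ, 0 ≤ 1 / ((m : ℝ) + c) - 1 / ((m : ℝ) + c + 1) := by
    intro m
    have h1 : (0:ℝ) < (m : ℝ) + c := by positivity
    have := one_div_le_one_div_of_le h1 (by linarith : (m : ℝ) + c ≤ (m : ℝ) + c + 1)
    linarith
  rw [hasSum_iff_tendsto_nat_of_nonneg hnn]
  have hps : ∀ n : ℕ, ∑ m ∈ Finset.range n, (1 / ((m : ℝ) + c) - 1 / ((m : ℝ) + c + 1))
      = 1 / c - 1 / ((n : ℝ) + c) := by
    intro n
    rw [show (1:ℝ) / c = 1 / (((0:ℕ) : ℝ) + c) by norm_num,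
      ← Finset.sum_range_sub' (fun m : ℕ => 1 / ((m : ℝ) + c)) n]
    exact Finset.sum_congr rfl fun i _ => by push_cast; ring
  have h0 : Tendsto (fun n : ℕ => 1 / ((n : ℝ) + c)) atTop (𝓝 0) := by
    have h1 : Tendsto (fun n : ℕ => (n : ℝ) + c) atTop atTop :=
      tendsto_atTop_add_const_right _ c tendsto_natCast_atTop_atTop
    simpa [one_div, Pi.inv_def] using h1.inv_tendsto_atTop
  refine Tendsto.congr (fun n => (hps n).symm) ?_
  simpa using tendsto_const_nhds.sub h0

lemma hasSum_inner (j : ℕ) :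
    HasSum (fun m : ℕ => 1 / ((m : ℝ) + 1) - 1 / ((j : ℝ) + (m : ℝ) + 2)) (Hh (j + 1)) := by
  have hs : HasSum (fun m : ℕ => ∑ i ∈ Finset.range (j + 1),
      (1 / ((m : ℝ) + ((i : ℝ) + 1)) - 1 / ((m : ℝ) + ((i : ℝ) + 1) + 1)))
      (∑ i ∈ Finset.range (j + 1), 1 / ((i : ℝ) + 1)) :=
    hasSum_sum fun i _ => tele ((i : ℝ) + 1) (by positivity)
  have h : ∀ m : ℕ, ∑ i ∈ Finset.range (j + 1),
      (1 / ((m : ℝ) + ((i : ℝ) + 1)) - 1 / ((m : ℝ) + ((i : ℝ) + 1) + 1))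
      = 1 / ((m : ℝ) + 1) - 1 / ((j : ℝ) + (m : ℝ) + 2) := by
    intro m
    have h2 : ∀ i ∈ Finset.range (j + 1),
        (1 / ((m : ℝ) + ((i : ℝ) + 1)) - 1 / ((m : ℝ) + ((i : ℝ) + 1) + 1))
        = ((fun i : ℕ => 1 / ((m : ℝ) + (i : ℝ) + 1)) i
          - (fun i : ℕ => 1 / ((m : ℝ) + (i : ℝ) + 1)) (i + 1)) := by
      intro i _
      push_cast
      ring_nf
    rw [Finset.sum_congr rfl h2, Finset.sum_range_sub' (fun i : ℕ => 1 / ((m : ℝ) + (i : ℝ) + 1))]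
    push_cast
    ring
  have hfe : (fun m : ℕ => ∑ i ∈ Finset.range (j + 1),
      (1 / ((m : ℝ) + ((i : ℝ) + 1)) - 1 / ((m : ℝ) + ((i : ℝ) + 1) + 1)))
      = fun m : ℕ => 1 / ((m : ℝ) + 1) - 1 / ((j : ℝ) + (m : ℝ) + 2) := funext h
  rw [hfe] at hs
  exact hs

def T1 (p : ℕ × ℕ) : ℝ :=
  (1 / ((p.1 : ℝ) + 1) ^ 6) * (1 / ((p.2 : ℝ) + 1) - 1 / ((p.1 : ℝ) + (p.2 : ℝ) + 2))

def T2 (p : ℕ × ℕ) : ℝ := 1 / (((p.2 : ℝ) + 1) * ((p.1 : ℝ) + (p.2 : ℝ) + 2) ^ 6)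

lemma T1_eq (p : ℕ × ℕ) :
    T1 p = 1 / (((p.1 : ℝ) + 1) ^ 5 * (((p.2 : ℝ) + 1) * ((p.1 : ℝ) + (p.2 : ℝ) + 2))) := by
  have hx : (0:ℝ) < (p.1 : ℝ) + 1 := by positivity
  have hy : (0:ℝ) < (p.2 : ℝ) + 1 := by positivity
  have hk : (0:ℝ) < (p.1 : ℝ) + (p.2 : ℝ) + 2 := by positivity
  rw [T1]
  field_simp
  ring

lemma summable_T1 : Summable T1 := by
  refine summable_dominated (fun p => by rw [T1_eq]; positivity) fun p => ?_
  rw [T1_eq]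
  have hx : (1:ℝ) ≤ (p.1 : ℝ) + 1 := by
    have := Nat.cast_nonneg (α := ℝ) p.1; linarith
  have hy : (1:ℝ) ≤ (p.2 : ℝ) + 1 := by
    have := Nat.cast_nonneg (α := ℝ) p.2; linarith
  refine one_div_le_one_div_of_le (by positivity) ?_
  have h1 : ((p.1 : ℝ) + 1) ^ 2 ≤ ((p.1 : ℝ) + 1) ^ 5 := pow_le_pow_right₀ hx (by norm_num)
  have h2 : ((p.2 : ℝ) + 1) ^ 2 ≤ ((p.2 : ℝ) + 1) * ((p.1 : ℝ) + (p.2 : ℝ) + 2) := by nlinarith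
  exact mul_le_mul h1 h2 (by positivity) (by positivity)

lemma summable_T2 : Summable T2 :=
  (summable_Fs (a := 1) (b := 6) (by norm_num) (by norm_num) (Or.inr (by norm_num))).congr
    fun p => by rw [Fs, pow_one, T2]

lemma summable_Acoef : Summable (fun j : ℕ => (1 / ((j : ℝ) + 1) ^ 6) * Hh (j + 1)) := by
  refine Summable.of_nonneg_of_le (fun j => by
      have := Hh_nonneg (j + 1); positivity)
    (fun j => ?_) (summable_zs (n := 5) (by norm_num))
  have h1 : (1 / ((j : ℝ) + 1) ^ 6) * Hh (j + 1) ≤ (1 / ((j : ℝ) + 1) ^ 6) * ((j : ℝ) + 1) := by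
    refine mul_le_mul_of_nonneg_left ?_ (by positivity)
    have := Hh_le (j + 1)
    push_cast at this
    linarith
  refine h1.trans (le_of_eq ?_)
  have hx : (0:ℝ) < (j : ℝ) + 1 := by positivity
  field_simp

lemma tsum_T1 : ∑' p : ℕ × ℕ, T1 p = ∑' j : ℕ, (1 / ((j : ℝ) + 1) ^ 6) * Hh (j + 1) := by
  rw [Summable.tsum_prod' summable_T1 (fun j => Summable.congr
    (((hasSum_inner j).summable).mul_left (1 / ((j : ℝ) + 1) ^ 6)) (fun m => rfl))]
  refine tsum_congr fun j => ?_
  have h : (fun m : ℕ => T1 (j, m)) = fun m : ℕ =>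
      (1 / ((j : ℝ) + 1) ^ 6) * (1 / ((m : ℝ) + 1) - 1 / ((j : ℝ) + (m : ℝ) + 2)) := rfl
  rw [h, tsum_mul_left, (hasSum_inner j).tsum_eq]


lemma u_eq (k : ℕ) : (1 / ((k:ℝ)+1) ^ 6) * Hh (k+1) - 1 / ((k:ℝ)+1) ^ 7
    = (1 / ((k:ℝ)+1) ^ 6) * Hh k := by
  rw [Hh_succ]
  have hx : (0:ℝ) < (k:ℝ) + 1 := by positivity
  field_simp
  ring

lemma summable_u : Summable (fun k : ℕ => (1 / ((k:ℝ)+1) ^ 6) * Hh k) :=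
  ((summable_Acoef).sub (summable_zs (n := 7) (by norm_num))).congr u_eq

lemma tsum_u : ∑' k : ℕ, (1 / ((k:ℝ)+1) ^ 6) * Hh k
    = (∑' j : ℕ, (1 / ((j : ℝ) + 1) ^ 6) * Hh (j + 1)) - zs 7 := by
  rw [zs, ← Summable.tsum_sub summable_Acoef (summable_zs (n := 7) (by norm_num))]
  exact tsum_congr fun k => (u_eq k).symm

lemma tsum_T2 : ∑' p : ℕ × ℕ, T2 p
    = (∑' j : ℕ, (1 / ((j : ℝ) + 1) ^ 6) * Hh (j + 1)) - zs 7 := by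
  have h1 : ∑' p : ℕ × ℕ, T2 p = ∑' q : (Σ k : ℕ, Fin (k + 1)), T2 (eSig q) :=
    (eSig.tsum_eq T2).symm
  have h2 : ∑' q : (Σ k : ℕ, Fin (k + 1)), T2 (eSig q)
      = ∑' k : ℕ, ∑' i : Fin (k + 1), T2 (eSig ⟨k, i⟩) :=
    Summable.tsum_sigma' (fun k => Summable.of_finite) ((eSig.summable_iff).mpr summable_T2)
  have hterm : ∀ (k : ℕ) (i : Fin (k + 1)), T2 (eSig ⟨k, i⟩)
      = (1 / ((k:ℝ)+2) ^ 6) * (1 / (((i : ℕ) : ℝ) + 1)) := by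
    intro k i
    have hik : (i : ℕ) ≤ k := Nat.lt_succ_iff.mp i.isLt
    rw [eSig_apply, T2]
    simp only
    rw [Nat.cast_sub hik]
    rw [show ((k:ℝ) - ((i:ℕ):ℝ) + ((i:ℕ):ℝ) + 2) = (k:ℝ) + 2 by ring,
      one_div_mul_one_div, mul_comm (((k:ℝ)+2)^6) _]
  have h3 : ∀ k : ℕ, ∑' i : Fin (k + 1), T2 (eSig ⟨k, i⟩)
      = (1 / ((k:ℝ)+2) ^ 6) * Hh (k + 1) := by
    intro k
    rw [tsum_fintype, Finset.sum_congr rfl (fun i _ => hterm k i), ← Finset.mul_sum]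
    congr 1
    rw [Hh, ← Fin.sum_univ_eq_sum_range (fun i : ℕ => 1 / ((i:ℝ)+1)) (k+1)]
  have h4 : ∑' k : ℕ, (1 / ((k:ℝ)+2) ^ 6) * Hh (k + 1)
      = ∑' k : ℕ, (1 / (((k+1 : ℕ):ℝ)+1) ^ 6) * Hh (k + 1) := by
    refine tsum_congr fun k => ?_
    push_cast
    ring_nf
  have h5 : ∑' k : ℕ, (1 / (((k+1 : ℕ):ℝ)+1) ^ 6) * Hh (k + 1)
      = ∑' k : ℕ, (1 / ((k:ℝ)+1) ^ 6) * Hh k := by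
    rw [Summable.tsum_eq_zero_add summable_u]
    simp [Hh]
  rw [h1, h2, tsum_congr h3, h4, h5, tsum_u]

set_option maxHeartbeats 1000000 in
lemma pfS (x y : ℝ) (hx : 0 < x) (hy : 0 < y) :
    1 / (x ^ 1 * (x + y) ^ 6) + (1 / (x ^ 2 * (x + y) ^ 5) + (1 / (x ^ 3 * (x + y) ^ 4)
      + (1 / (x ^ 4 * (x + y) ^ 3) + 1 / (x ^ 5 * (x + y) ^ 2))))
    = (1 / x ^ 6) * (1 / y - 1 / (x + y)) - 1 / (y * (x + y) ^ 6) := by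
  have hk : 0 < x + y := by linarith
  field_simp
  ring

lemma tsum_add5 {f1 f2 f3 f4 f5 : ℕ × ℕ → ℝ} (h1 : Summable f1) (h2 : Summable f2)
    (h3 : Summable f3) (h4 : Summable f4) (h5 : Summable f5) :
    ∑' p, (f1 p + (f2 p + (f3 p + (f4 p + f5 p)))) =
      (∑' p, f1 p) + ((∑' p, f2 p) + ((∑' p, f3 p) + ((∑' p, f4 p) + (∑' p, f5 p)))) := by
  rw [Summable.tsum_add h1 (h2.add (h3.add (h4.add h5))), Summable.tsum_add h2 (h3.add (h4.add h5)),
    Summable.tsum_add h3 (h4.add h5), Summable.tsum_add h4 h5]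

lemma sum_formula : Dd 1 6 + Dd 2 5 + Dd 3 4 + Dd 4 3 + Dd 5 2 = zs 7 := by
  have s16 := summable_Fd (a := 1) (b := 6) (by norm_num) (by norm_num) (Or.inr (by norm_num))
  have s25 := summable_Fd (a := 2) (b := 5) (by norm_num) (by norm_num) (Or.inl (by norm_num))
  have s34 := summable_Fd (a := 3) (b := 4) (by norm_num) (by norm_num) (Or.inl (by norm_num))
  have s43 := summable_Fd (a := 4) (b := 3) (by norm_num) (by norm_num) (Or.inl (by norm_num))
  have s52 := summable_Fd (a := 5) (b := 2) (by norm_num) (by norm_num) (Or.inl (by norm_num))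
  have pw : ∀ p : ℕ × ℕ, Fd 1 6 p + (Fd 2 5 p + (Fd 3 4 p + (Fd 4 3 p + Fd 5 2 p)))
      = T1 p - T2 p := by
    intro p
    unfold Fd T1 T2
    have hx : (0:ℝ) < (p.1 : ℝ) + 1 := by positivity
    have hy : (0:ℝ) < (p.2 : ℝ) + 1 := by positivity
    have hxy : (p.1 : ℝ) + (p.2 : ℝ) + 2 = ((p.1 : ℝ) + 1) + ((p.2 : ℝ) + 1) := by ring
    rw [hxy]
    exact pfS ((p.1 : ℝ) + 1) ((p.2 : ℝ) + 1) hx hy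
  have big : ∑' p : ℕ × ℕ, (Fd 1 6 p + (Fd 2 5 p + (Fd 3 4 p + (Fd 4 3 p + Fd 5 2 p))))
      = ∑' p : ℕ × ℕ, (T1 p - T2 p) := tsum_congr pw
  rw [tsum_add5 s16 s25 s34 s43 s52] at big
  rw [Summable.tsum_sub summable_T1 summable_T2, tsum_T1, tsum_T2] at big
  show Dd 1 6 + Dd 2 5 + Dd 3 4 + Dd 4 3 + Dd 5 2 = zs 7
  have : Dd 1 6 + (Dd 2 5 + (Dd 3 4 + (Dd 4 3 + Dd 5 2))) = zs 7 := by
    rw [Dd, Dd, Dd, Dd, Dd] at *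
    linarith [big]
  linarith [this]

end MZVAux

/-- The identity `ζ(3,4) = 17 ζ(7) - 10 ζ(5) ζ(2)`. -/
theorem zeta_three_four :
    (∑' p : {p : ℕ × ℕ // 0 < p.1 ∧ p.1 < p.2}, 1 / ((p.1.1 : ℝ) ^ 3 * (p.1.2 : ℝ) ^ 4)) =
      17 * (∑' k : ℕ, 1 / ((k : ℝ) + 1) ^ 7) -
        10 * (∑' k : ℕ, 1 / ((k : ℝ) + 1) ^ 5) * (∑' k : ℕ, 1 / ((k : ℝ) + 1) ^ 2) := by
  have hL : (∑' p : {p : ℕ × ℕ // 0 < p.1 ∧ p.1 < p.2},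
      1 / ((p.1.1 : ℝ) ^ 3 * (p.1.2 : ℝ) ^ 4)) = Dd 3 4 := by
    rw [Dd]
    refine ((eMain.tsum_eq (fun p : {p : ℕ × ℕ // 0 < p.1 ∧ p.1 < p.2} =>
      1 / ((p.1.1 : ℝ) ^ 3 * (p.1.2 : ℝ) ^ 4))).symm).trans (tsum_congr fun q => ?_)
    show 1 / (((eMain q : ℕ × ℕ).1 : ℝ) ^ 3 * ((eMain q : ℕ × ℕ).2 : ℝ) ^ 4) = Fd 3 4 q
    rw [eMain_apply, Fd]
    push_cast
    ring_nf
  have S1 := stuffle (a := 2) (b := 5) (by norm_num) (by norm_num)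
  rw [show (2 + 5 : ℕ) = 7 from rfl] at S1
  have S2 := stuffle (a := 3) (b := 4) (by norm_num) (by norm_num)
  rw [show (3 + 4 : ℕ) = 7 from rfl] at S2
  have R1 := euler34
  have R2 := euler25
  have SF := sum_formula
  have hc : 10 * zs 5 * zs 2 = 10 * (zs 2 * zs 5) := by ring
  rw [hL]
  show Dd 3 4 = 17 * zs 7 - 10 * zs 5 * zs 2
  linarith [S1, S2, R1, R2, SF, hc]
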